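/- Properties P₂ and P₃ are stable under composition of affine tasks: for tasks A on n = 3^ℓ and B on m = 3^{ℓ'} (ℓ, ℓ' ≥ 1), {0,1} ∈ A⋆B if and only if {0,1} ∈ A and {0,1} ∈ B, and {n·m−1, n·m} ∈ A⋆B if and only if {n−1,n} ∈ A and {m−1,m} ∈ B. Consequently, for every k ≥ 1, P₂(A^{⋆k}) ↔ P₂(A) and P₃(A^{⋆k}) ↔ P₃(A). -/
import Mathlib


/-!
2-process affine tasks, modeled combinatorially.
The ℓ-th iterated standard chromatic subdivision of the 1-simplex is the path
graph on vertices `{0, …, n}`, `n = 3^ℓ`, whose edges are the pairs `{i, i+1}`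
for `0 ≤ i < n`; vertex `i` has color `i % 2`, vertex `0` is the solo vertex of
process `p₀` and vertex `n` the solo vertex of `p₁`.  An edge `{i, i+1}` is
encoded by its left endpoint `i`, and a 2-process affine task on `n` is a
nonempty finite set `A : Finset ℕ` of such edges (left endpoints `< n`).
-/

/-- `StepRel A x y`: the vertices `x` and `y` are joined by an edge of `A`
(the edge `{i, i+1}` being encoded by its left endpoint `i`). -/
def StepRel (A : Finset ℕ) (x y : ℕ) : Prop :=
  (y = x + 1 ∧ x ∈ A) ∨ (x = y + 1 ∧ y ∈ A)

/-- `P₁(A)`: the vertices `0` and `n` are joined by a path all of whose edges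
lie in `A`. -/
def P1 (n : ℕ) (A : Finset ℕ) : Prop := Relation.ReflTransGen (StepRel A) 0 n

/-- `P₂(A)`: the edge `{0, 1}` belongs to `A`. -/
def P2 (A : Finset ℕ) : Prop := 0 ∈ A

/-- `P₃(A)`: the edge `{n-1, n}` belongs to `A`. -/
def P3 (n : ℕ) (A : Finset ℕ) : Prop := n - 1 ∈ A

open Classical in
/-- The class of a 2-process affine task `A` on `{0,…,n}`:
`1` if `P₁(A)`; `2` if `¬P₁ ∧ P₂ ∧ P₃`; `3` if `¬P₁ ∧ P₂ ∧ ¬P₃`;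
`4` if `¬P₁ ∧ ¬P₂ ∧ P₃`; `5` if `¬P₁ ∧ ¬P₂ ∧ ¬P₃`. -/
noncomputable def classOf (n : ℕ) (A : Finset ℕ) : ℕ :=
  if P1 n A then 1
  else if P2 A then (if P3 n A then 2 else 3)
  else (if P3 n A then 4 else 5)

/-- The class order `⊑` on `{1, …, 5}`: `c ⊑ c'` iff `c = c'`, or `c = 1`,
or `c' = 5`, or (`c = 2` and `c' ∈ {3, 4}`). -/
def ClassLE (c c' : ℕ) : Prop :=
  c = c' ∨ c = 1 ∨ c' = 5 ∨ (c = 2 ∧ (c' = 3 ∨ c' = 4))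

/-- The composition `A ⋆ B` of a task `A` on `{0,…,n}` with a task `B` on
`{0,…,m}`: each edge of `A` is replaced by an appropriately oriented copy of
`B`; its edges are `{i·m + r, i·m + r + 1}` for `{i, i+1} ∈ A` and
`{j, j+1} ∈ B`, where `r = j` if `i` is even and `r = m - 1 - j` if `i` is odd
(edges encoded by left endpoints). -/
def comp (m : ℕ) (A B : Finset ℕ) : Finset ℕ :=
  (A ×ˢ B).image fun p => p.1 * m + (if Even p.1 then p.2 else m - 1 - p.2)

/-- `iterTask n A k` is the iterate `A^{⋆k}` (for `k ≥ 1`) of a task `A` on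
`{0,…,n}`, a task on `{0,…,n^k}`: `A^{⋆1} = A`, `A^{⋆(k+1)} = A^{⋆k} ⋆ A`.
(The value at `k = 0` is irrelevant and set to `A`.) -/
def iterTask (n : ℕ) (A : Finset ℕ) : ℕ → Finset ℕ
  | 0 => A
  | 1 => A
  | k + 2 => comp n (iterTask n A (k + 1)) A

/-- A chromatic carrier-preserving simplicial map `δ` from a task `A` on
`{0,…,n}` to the subdivided 1-simplex on `{0,…,m}`: `δ` maps `{0,…,n}` to
`{0,…,m}`; `δ i ≡ i (mod 2)` for every vertex incident to an edge of `A`;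
`|δ (i+1) - δ i| = 1` for every edge `{i, i+1} ∈ A`; `δ 0 = 0` whenever
`{0,1} ∈ A`; and `δ n = m` whenever `{n-1, n} ∈ A`. -/
def IsCCMap (n m : ℕ) (A : Finset ℕ) (δ : ℕ → ℕ) : Prop :=
  (∀ i ≤ n, δ i ≤ m) ∧
  (∀ i ∈ A, δ i % 2 = i % 2 ∧ δ (i + 1) % 2 = (i + 1) % 2) ∧
  (∀ i ∈ A, δ (i + 1) = δ i + 1 ∨ δ i = δ (i + 1) + 1) ∧
  (0 ∈ A → δ 0 = 0) ∧
  (n - 1 ∈ A → δ n = m)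

/-- The image task `δ(A) = { {δ i, δ (i+1)} : {i, i+1} ∈ A }`
(edges encoded by left endpoints, i.e. by `min (δ i) (δ (i+1))`). -/
def imageTask (A : Finset ℕ) (δ : ℕ → ℕ) : Finset ℕ :=
  A.image fun i => min (δ i) (δ (i + 1))

/-- `Solves m n B A`: the affine model `B*` of a task `B` on `{0,…,m}` solves
the task `A` on `{0,…,n}`, i.e. there exist `k ≥ 1` and a chromatic
carrier-preserving simplicial map `δ` from `B^{⋆k}` (a task on `{0,…,m^k}`)
to the subdivided 1-simplex on `{0,…,n}` with `δ(B^{⋆k}) ⊆ A`. -/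
def Solves (m n : ℕ) (B A : Finset ℕ) : Prop :=
  ∃ k, 1 ≤ k ∧ ∃ δ : ℕ → ℕ,
    IsCCMap (m ^ k) n (iterTask m B k) δ ∧ imageTask (iterTask m B k) δ ⊆ A

lemma mem_comp {m : ℕ} {A B : Finset ℕ} {x : ℕ} :
    x ∈ comp m A B ↔ ∃ i ∈ A, ∃ j ∈ B,
      i * m + (if Even i then j else m - 1 - j) = x := by
  simp only [comp, Finset.mem_image, Finset.mem_product, Prod.exists]
  constructor
  · rintro ⟨a, b, ⟨ha, hb⟩, h⟩
    exact ⟨a, ha, b, hb, h⟩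
  · rintro ⟨a, ha, b, hb, h⟩
    exact ⟨a, b, ⟨ha, hb⟩, h⟩

lemma comp_P2 {m : ℕ} (hm : 1 ≤ m) (A B : Finset ℕ) :
    0 ∈ comp m A B ↔ 0 ∈ A ∧ 0 ∈ B := by
  rw [mem_comp]
  constructor
  · rintro ⟨i, hi, j, hj, h⟩
    have him : i * m = 0 := by omega
    have : i = 0 := by
      rcases Nat.mul_eq_zero.mp him with h' | h' <;> omega
    subst this
    simp only [Even.zero, if_true] at h
    have hj0 : j = 0 := by omega
    exact ⟨hi, hj0 ▸ hj⟩
  · rintro ⟨hA, hB⟩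
    exact ⟨0, hA, 0, hB, by simp⟩

lemma comp_P3 {n m : ℕ} (hn : 1 ≤ n) (hm : 1 ≤ m) (hodd : Odd n)
    (A B : Finset ℕ) (hAlt : ∀ i ∈ A, i < n) (hBlt : ∀ j ∈ B, j < m) :
    n * m - 1 ∈ comp m A B ↔ n - 1 ∈ A ∧ m - 1 ∈ B := by
  have heven : Even (n - 1) := Nat.Odd.sub_odd hodd odd_one
  rw [mem_comp]
  constructor
  · rintro ⟨i, hi, j, hj, h⟩
    have hilt := hAlt i hi
    have hjlt := hBlt j hj
    have hin : i = n - 1 := by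
      by_contra hne'
      have : i ≤ n - 2 := by omega
      have hr : (if Even i then j else m - 1 - j) < m := by
        split <;> omega
      have : i * m + (if Even i then j else m - 1 - j) < (n - 1) * m := by
        calc i * m + (if Even i then j else m - 1 - j) < i * m + m := by omega
        _ = (i + 1) * m := by ring
        _ ≤ (n - 1) * m := Nat.mul_le_mul_right m (by omega)
      have : (n - 1) * m ≤ n * m - 1 := by
        have : (n - 1) * m + 1 ≤ n * m := by
          have : (n - 1) * m + m ≤ n * m := by
            have := Nat.succ_pred_eq_of_pos hn
            nlinarith [Nat.sub_add_cancel hn]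
          omega
        omega
      omega
    subst hin
    rw [if_pos heven] at h
    have : (n - 1) * m = n * m - m := by
      rw [Nat.sub_mul, one_mul]
    have hY : m ≤ n * m := Nat.le_mul_of_pos_left m hn
    have hj' : j = m - 1 := by omega
    subst hj'
    exact ⟨hi, hj⟩
  · rintro ⟨hA, hB⟩
    refine ⟨n - 1, hA, m - 1, hB, ?_⟩
    rw [if_pos heven]
    have h1 : (n - 1) * m = n * m - m := by rw [Nat.sub_mul, one_mul]
    have h2 : m ≤ n * m := Nat.le_mul_of_pos_left m hn
    omega

lemma comp_lt {n m : ℕ} (hm : 1 ≤ m) {A B : Finset ℕ}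
    (hAlt : ∀ i ∈ A, i < n) (hBlt : ∀ j ∈ B, j < m) :
    ∀ x ∈ comp m A B, x < n * m := by
  intro x hx
  rw [mem_comp] at hx
  obtain ⟨i, hi, j, hj, h⟩ := hx
  have hilt := hAlt i hi
  have hjlt := hBlt j hj
  have hr : (if Even i then j else m - 1 - j) < m := by split <;> omega
  have : i * m + m ≤ n * m := by
    calc i * m + m = (i + 1) * m := by ring
    _ ≤ n * m := Nat.mul_le_mul_right m (by omega)
  omega

lemma comp_nonempty {m : ℕ} {A B : Finset ℕ} (hA : A.Nonempty) (hB : B.Nonempty) :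
    (comp m A B).Nonempty := by
  obtain ⟨a, ha⟩ := hA
  obtain ⟨b, hb⟩ := hB
  exact ⟨_, mem_comp.mpr ⟨a, ha, b, hb, rfl⟩⟩

/-- `P₂` and `P₃` are stable under composition of affine tasks:
`{0,1} ∈ A⋆B ↔ {0,1} ∈ A ∧ {0,1} ∈ B`, and
`{n·m − 1, n·m} ∈ A⋆B ↔ {n−1,n} ∈ A ∧ {m−1,m} ∈ B`; consequently, for every
`k ≥ 1`, `P₂(A^{⋆k}) ↔ P₂(A)` and `P₃(A^{⋆k}) ↔ P₃(A)`. -/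
theorem P2_P3_stable_comp
    (ℓ ℓ' n m : ℕ) (hℓ : 1 ≤ ℓ) (hℓ' : 1 ≤ ℓ') (hn : n = 3 ^ ℓ) (hm : m = 3 ^ ℓ')
    (A B : Finset ℕ) (hAne : A.Nonempty) (hAlt : ∀ i ∈ A, i < n)
    (hBne : B.Nonempty) (hBlt : ∀ i ∈ B, i < m) :
    (P2 (comp m A B) ↔ P2 A ∧ P2 B) ∧
    (P3 (n * m) (comp m A B) ↔ P3 n A ∧ P3 m B) ∧
    (∀ k, 1 ≤ k →
      ((P2 (iterTask n A k) ↔ P2 A) ∧ (P3 (n ^ k) (iterTask n A k) ↔ P3 n A))) := by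
  have hm1 : 1 ≤ m := by subst hm; exact Nat.one_le_pow _ _ (by norm_num)
  have hn1 : 1 ≤ n := by subst hn; exact Nat.one_le_pow _ _ (by norm_num)
  have hnodd : Odd n := by subst hn; exact Odd.pow (by decide)
  refine ⟨comp_P2 hm1 A B, comp_P3 hn1 hm1 hnodd A B hAlt hBlt, ?_⟩
  have hstep : ∀ k, 1 ≤ k → iterTask n A (k + 1) = comp n (iterTask n A k) A := by
    intro k hk
    cases k with
    | zero => omega
    | succ k' => rfl
  have hlt : ∀ k, 1 ≤ k → ∀ j ∈ iterTask n A k, j < n ^ k := by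
    intro k hk
    induction k with
    | zero => omega
    | succ k ih =>
      rcases Nat.eq_zero_or_pos k with rfl | hkpos
      · simpa [iterTask] using hAlt
      · rw [hstep k hkpos, pow_succ]
        exact comp_lt hn1 (ih hkpos) hAlt
  intro k hk
  induction k with
  | zero => omega
  | succ k ih =>
    rcases Nat.eq_zero_or_pos k with rfl | hkpos
    · simp [iterTask]
    · obtain ⟨ihP2, ihP3⟩ := ih hkpos
      rw [hstep k hkpos]
      have hlt' := hlt k hkpos
      have hnk1 : 1 ≤ n ^ k := Nat.one_le_pow _ _ (by omega)
      have hnkodd : Odd (n ^ k) := hnodd.pow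
      constructor
      · unfold P2 at ihP2 ⊢
        rw [comp_P2 hn1]
        exact ⟨fun h => h.2, fun h => ⟨ihP2.mpr h, h⟩⟩
      · unfold P3 at ihP3 ⊢
        rw [pow_succ, comp_P3 hnk1 hn1 hnkodd _ A hlt' hAlt]
        exact ⟨fun h => h.2, fun h => ⟨ihP3.mpr h, h⟩⟩
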